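/- Let X_1 and X_2 be Polish metric spaces (complete separable metric spaces), let μ be a Borel probability measure on X_1, and let F_n, F : X_1 → X_2 be Borel maps. If the measures (Id, F_n)_#μ converge narrowly to (Id, F)_#μ in the space of Borel probability measures on X_1×X_2, then F_n converges to F in μ-measure, i.e. for every ε > 0, μ({x ∈ X_1 : d_{X_2}(F_n(x), F(x)) > ε}) → 0 as n → ∞. -/

import Mathlib

open MeasureTheory Set Filter Topology
open scoped ENNReal NNReal

noncomputable section

/-- Euclidean space `ℝ^d`. -/
abbrev Euc (d : ℕ) : Type := EuclideanSpace ℝ (Fin d)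

variable {d : ℕ}

/-- Weak-star (`L^∞` in duality with `L^1`) continuity of `t ↦ ρ t` on `[a, c]`. -/
def WeakStarCont (a c : ℝ) (ρ : ℝ → Euc d → ℝ) : Prop :=
  ∀ g : Euc d → ℝ, Integrable g →
    ContinuousOn (fun t => ∫ x, ρ t x * g x) (Icc a c)

/-- `ρ` solves the continuity equation `∂ₜ ρ + div (b ρ) = 0` on `(a,c) × U`
in the sense of distributions. -/
def SolvesCE (b : ℝ → Euc d → Euc d) (U : Set (Euc d)) (a c : ℝ)
    (ρ : ℝ → Euc d → ℝ) : Prop :=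
  ∀ φ : ℝ × Euc d → ℝ, ContDiff ℝ (⊤ : ℕ∞) φ → HasCompactSupport φ →
    tsupport φ ⊆ Ioo a c ×ˢ U →
    ∫ t in Ioo a c, ∫ x, ρ t x * (fderiv ℝ φ (t, x)) (1, b t x) = 0

/-- The class `𝓛_{[a,c],Ω}`: bounded, nonnegative, with compact support in `[a,c] × Ω`. -/
def MemL (Ω : Set (Euc d)) (a c : ℝ) (ρ : ℝ → Euc d → ℝ) : Prop :=
  Measurable (Function.uncurry ρ) ∧ (∀ t x, 0 ≤ ρ t x) ∧ (∃ M : ℝ, ∀ t x, ρ t x ≤ M) ∧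
    ∃ K : Set (ℝ × Euc d), IsCompact K ∧ K ⊆ Icc a c ×ˢ Ω ∧
      ∀ t ∈ Icc a c, ∀ x, ρ t x ≠ 0 → (t, x) ∈ K

/-- Assumption (a-Ω): local integrability of `b` on `(0,T) × Ω`. -/
def AssumptionA (b : ℝ → Euc d → Euc d) (T : ℝ) (Ω : Set (Euc d)) : Prop :=
  ∀ Ω' : Set (Euc d), IsOpen Ω' → closure Ω' ⊆ Ω → IsCompact (closure Ω') →
    IntegrableOn (fun p : ℝ × Euc d => b p.1 p.2) (Ioo 0 T ×ˢ Ω')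

/-- Assumption (b-Ω): uniqueness of bounded nonnegative compactly supported
weakly-star continuous solutions of the continuity equation. -/
def AssumptionB (b : ℝ → Euc d → Euc d) (T : ℝ) (Ω : Set (Euc d)) : Prop :=
  ∀ a c : ℝ, 0 ≤ a → a ≤ c → c ≤ T → ∀ ρ₁ ρ₂ : ℝ → Euc d → ℝ,
    MemL Ω a c ρ₁ → MemL Ω a c ρ₂ →
    WeakStarCont a c ρ₁ → WeakStarCont a c ρ₂ →
    SolvesCE b Ω a c ρ₁ → SolvesCE b Ω a c ρ₂ →
    ρ₁ a =ᵐ[(volume : Measure (Euc d))] ρ₂ a →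
    ∀ t ∈ Icc a c, ρ₁ t =ᵐ[(volume : Measure (Euc d))] ρ₂ t

/-- One-sided distributional divergence bound `div b(t,·) ≥ m(t)` on `Ω'`, with `∫₀ᵀ |m| = L`. -/
def DivBound (b : ℝ → Euc d → Euc d) (T : ℝ) (Ω' : Set (Euc d)) (L : ℝ) : Prop :=
  ∃ m : ℝ → ℝ, IntegrableOn m (Ioo 0 T) ∧ (∫ t in Ioo 0 T, |m t|) = L ∧
    ∀ᵐ t ∂(volume.restrict (Ioo 0 T)),
      ∀ φ : Euc d → ℝ, ContDiff ℝ (⊤ : ℕ∞) φ → HasCompactSupport φ →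
        tsupport φ ⊆ Ω' → (∀ x, 0 ≤ φ x) →
        ∫ x in Ω', (fderiv ℝ φ x) (b t x) ≤ - m t * ∫ x in Ω', φ x

/-- Hitting time of a curve `γ` (defined on `[s, τ)`) in the set `A`:
the supremum of times `t` such that `γ([s,t])` is contained in a compact subset of `A`. -/
def hitTime (A : Set (Euc d)) (s τ : ℝ) (γ : ℝ → Euc d) : ℝ :=
  sSup {t : ℝ | s ≤ t ∧ t < τ ∧
    ∃ K : Set (Euc d), IsCompact K ∧ K ⊆ A ∧ ∀ r ∈ Icc s t, γ r ∈ K}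

/-- Local regular flow starting from `B` up to time `τ`. -/
structure IsLocRegFlow (b : ℝ → Euc d → Euc d) (B : Set (Euc d)) (τ : ℝ)
    (X : ℝ → Euc d → Euc d) : Prop where
  mble : Measurable (Function.uncurry X)
  ae_sol : ∀ᵐ x ∂(volume.restrict B), X 0 x = x ∧
    IntegrableOn (fun s => b s (X s x)) (Ioc 0 τ) ∧
    ∀ t ∈ Icc 0 τ, X t x = x + ∫ s in (0:ℝ)..t, b s (X s x)
  compress : ∃ C : ℝ≥0, ∀ t ∈ Icc 0 τ,
    (volume.restrict B).map (X t) ≤ (C : ℝ≥0∞) • volume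

/-- Maximal regular flow of `b` in `Ω`, with initial time `s` and final horizon `T`. -/
structure IsMaxRegFlowFrom (b : ℝ → Euc d → Euc d) (s T : ℝ) (Ω : Set (Euc d))
    (V : Euc d → ℝ) (X : ℝ → Euc d → Euc d) (TX : Euc d → ℝ) : Prop where
  mble : Measurable (Function.uncurry X)
  mbleT : Measurable TX
  time_mem : ∀ x ∈ Ω, s < TX x ∧ TX x ≤ T
  ae_sol : ∀ᵐ x ∂(volume.restrict Ω), X s x = x ∧
    ∀ τ ∈ Ico s (TX x), IntegrableOn (fun r => b r (X r x)) (Ioc s τ) ∧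
      ∀ t ∈ Icc s τ, X t x = x + ∫ r in s..t, b r (X r x)
  compress : ∀ Ω' : Set (Euc d), IsOpen Ω' → closure Ω' ⊆ Ω → IsCompact (closure Ω') →
    ∃ C : ℝ≥0, ∀ t ∈ Icc s T,
      (volume.restrict {x | x ∈ Ω' ∧ t < hitTime Ω' s (TX x) (fun r => X r x)}).map (X t)
        ≤ (C : ℝ≥0∞) • volume
  blowup : ∀ᵐ x ∂(volume.restrict Ω), TX x < T →
    ∀ M : ℝ, ∀ u ∈ Ico s (TX x), ∃ t ∈ Ioo u (TX x), M < V (X t x)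

/-- Maximal regular flow of `b` in `Ω` (initial time `0`). -/
abbrev IsMaxRegFlow (b : ℝ → Euc d → Euc d) (T : ℝ) (Ω : Set (Euc d))
    (V : Euc d → ℝ) (X : ℝ → Euc d → Euc d) (TX : Euc d → ℝ) : Prop :=
  IsMaxRegFlowFrom b 0 T Ω V X TX

/-- Admissible confining potential: continuous, nonnegative, blowing up at `∂Ω`. -/
def AdmissiblePotential (Ω : Set (Euc d)) (V : Euc d → ℝ) : Prop :=
  ContinuousOn V Ω ∧ (∀ x ∈ Ω, 0 ≤ V x) ∧
    ∀ M : ℝ, ∃ K : Set (Euc d), IsCompact K ∧ K ⊆ Ω ∧ ∀ x ∈ Ω \ K, M < V x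

/-- The space of continuous paths `[0,T] → ℝ^d`. -/
abbrev PathSp (d : ℕ) (T : ℝ) : Type := C(Icc (0:ℝ) T, Euc d)

instance pathMeasurableSpace (d : ℕ) (T : ℝ) : MeasurableSpace (PathSp d T) := borel _
instance pathBorelSpace (d : ℕ) (T : ℝ) : BorelSpace (PathSp d T) := ⟨rfl⟩

/-- Evaluation of a path at time `t` (via the projection of `ℝ` onto `[0,T]`). -/
def ev {T : ℝ} (hT : (0:ℝ) ≤ T) (t : ℝ) (γ : PathSp d T) : Euc d :=
  γ (projIcc 0 T hT t)

/-- A path is an absolutely continuous integral curve of `b` on `[0,T]`. -/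
def PathSolODE {T : ℝ} (hT : (0:ℝ) ≤ T) (b : ℝ → Euc d → Euc d) (γ : PathSp d T) : Prop :=
  IntegrableOn (fun s => b s (ev hT s γ)) (Ioc 0 T) ∧
    ∀ t ∈ Icc (0:ℝ) T, ev hT t γ = ev hT 0 γ + ∫ s in (0:ℝ)..t, b s (ev hT s γ)

/-- Regular generalized flow of `c` in `closure A`, with compressibility constant `C`. -/
structure IsRegGenFlow {T : ℝ} (hT : (0:ℝ) ≤ T) (c : ℝ → Euc d → Euc d) (A : Set (Euc d))
    (η : Measure (PathSp d T)) (C : ℝ≥0) : Prop where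
  prob : IsProbabilityMeasure η
  conc : η {γ | ¬ ((∀ t ∈ Icc (0:ℝ) T, ev hT t γ ∈ closure A) ∧ PathSolODE hT c γ)} = 0
  poz : 0 < C
  compress : ∀ t ∈ Icc (0:ℝ) T, (η.map (ev hT t)).restrict A ≤ (C : ℝ≥0∞) • volume

/-- Pointwise divergence of a (smooth) vector field: trace of the spatial differential. -/
def divergence (b : ℝ → Euc d → Euc d) (t : ℝ) (x : Euc d) : ℝ :=
  LinearMap.trace ℝ (Euc d) (fderiv ℝ (fun y => b t y) x : Euc d →ₗ[ℝ] Euc d)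

/-- `A^ε`: the points of `A` at distance at least `ε` from the complement of `A`. -/
def innerSet (A : Set (Euc d)) (ε : ℝ) : Set (Euc d) :=
  {x ∈ A | ε ≤ Metric.infDist x Aᶜ}

lemma my_tight {X : Type*} [MetricSpace X] [CompleteSpace X]
    [TopologicalSpace.SeparableSpace X] [MeasurableSpace X] [OpensMeasurableSpace X]
    (μ : Measure X) [IsFiniteMeasure μ] {δ : ℝ≥0∞} (hδ : δ ≠ 0) :
    ∃ K : Set X, IsCompact K ∧ μ Kᶜ ≤ δ := by
  rcases isEmpty_or_nonempty X with hX | hX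
  · refine ⟨∅, isCompact_empty, ?_⟩
    rw [Set.eq_empty_of_isEmpty (∅ : Set X)ᶜ]
    simp
  obtain ⟨u, hu⟩ := TopologicalSpace.exists_dense_seq X
  obtain ⟨ε', hε'pos, hε'sum⟩ := ENNReal.exists_pos_sum_of_countable' hδ ℕ
  set T : ℕ → ℕ → Set X := fun n N => ⋃ i ∈ Finset.range (N + 1),
    Metric.closedBall (u i) (1 / (n + 1)) with hT
  have hTclosed : ∀ n N, IsClosed (T n N) := fun n N =>
    (Finset.range (N + 1)).finite_toSet.isClosed_biUnion fun i _ => Metric.isClosed_closedBall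
  have hTmono : ∀ n, Monotone (T n) := by
    intro n N M hNM
    apply Set.biUnion_subset_biUnion_left
    intro i hi
    have : i < N + 1 := Finset.mem_range.1 hi
    exact Finset.mem_range.2 (by omega)
  have hcov : ∀ n, ⋂ N, (T n N)ᶜ = ∅ := by
    intro n
    rw [← Set.compl_iUnion, Set.compl_empty_iff]
    apply Set.eq_univ_of_forall
    intro x
    have hpos : (0:ℝ) < 1 / (n + 1) := by positivity
    obtain ⟨i, hi⟩ := Metric.denseRange_iff.1 hu x (1 / (n + 1)) hpos
    refine Set.mem_iUnion.2 ⟨i, Set.mem_iUnion₂.2 ⟨i, Finset.self_mem_range_succ i, ?_⟩⟩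
    exact Metric.mem_closedBall.2 hi.le
  have hN : ∀ n, ∃ N, μ ((T n N)ᶜ) < ε' n := by
    intro n
    have htend : Tendsto (fun N => μ ((T n N)ᶜ)) atTop (𝓝 (μ (⋂ N, (T n N)ᶜ))) :=
      tendsto_measure_iInter_atTop
        (fun N => ((hTclosed n N).measurableSet.compl).nullMeasurableSet)
        (fun N M hNM => Set.compl_subset_compl.2 (hTmono n hNM))
        ⟨0, measure_ne_top _ _⟩
    rw [hcov n, measure_empty] at htend
    exact (htend.eventually_lt_const (hε'pos n)).exists
  choose N hNlt using hN
  refine ⟨⋂ n, T n (N n), ?_, ?_⟩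
  · apply TotallyBounded.isCompact_of_isClosed
    · rw [Metric.totallyBounded_iff]
      intro ε hε
      obtain ⟨n, hn⟩ := exists_nat_one_div_lt hε
      refine ⟨u '' (Finset.range (N n + 1) : Set ℕ), (Set.toFinite _).image u, ?_⟩
      intro x hx
      have hx' : x ∈ T n (N n) := Set.mem_iInter.1 hx n
      obtain ⟨i, hi, hxi⟩ := Set.mem_iUnion₂.1 hx'
      refine Set.mem_iUnion₂.2 ⟨u i, ⟨i, by simpa using hi, rfl⟩, ?_⟩
      exact Metric.mem_ball.2 (lt_of_le_of_lt (Metric.mem_closedBall.1 hxi) hn)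
    · exact isClosed_iInter fun n => hTclosed n (N n)
  · rw [Set.compl_iInter]
    calc μ (⋃ n, (T n (N n))ᶜ) ≤ ∑' n, μ ((T n (N n))ᶜ) := measure_iUnion_le _
      _ ≤ ∑' n, ε' n := ENNReal.tsum_le_tsum fun n => (hNlt n).le
      _ ≤ δ := hε'sum.le

lemma my_simpleFunc_continuousOn {X₁ X₂ : Type*} [MetricSpace X₁] [CompleteSpace X₁]
    [TopologicalSpace.SeparableSpace X₁] [MeasurableSpace X₁] [BorelSpace X₁]
    [TopologicalSpace X₂]
    (μ : Measure X₁) [IsFiniteMeasure μ] (s : SimpleFunc X₁ X₂)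
    {δ : ℝ≥0∞} (hδ : δ ≠ 0) :
    ∃ D : Set X₁, IsCompact D ∧ μ Dᶜ ≤ δ ∧ ContinuousOn s D := by
  classical
  have hδ2 : δ / 2 ≠ 0 := (ENNReal.half_pos hδ).ne'
  obtain ⟨G, hGc, hGμ⟩ := my_tight μ hδ2
  obtain ⟨ε', hε'pos, hε'sum⟩ :=
    ENNReal.exists_pos_sum_of_countable' hδ2 {y // y ∈ s.range}
  have hfib : ∀ y : {y // y ∈ s.range},
      ∃ Z, Z ⊆ s ⁻¹' {(y : X₂)} ∧ IsClosed Z ∧ μ (s ⁻¹' {(y : X₂)} \ Z) < ε' y :=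
    fun y => (s.measurableSet_fiber (y : X₂)).exists_isClosed_diff_lt
      (measure_ne_top μ _) (hε'pos y).ne'
  choose Z hZsub hZclosed hZμ using hfib
  refine ⟨⋃ y, Z y ∩ G, ?_, ?_, ?_⟩
  · exact isCompact_iUnion fun y => hGc.inter_left (hZclosed y)
  · have hsub : (⋃ y, Z y ∩ G)ᶜ ⊆ Gᶜ ∪ ⋃ y : {y // y ∈ s.range}, (s ⁻¹' {(y : X₂)} \ Z y) := by
      intro x hx
      by_cases hxG : x ∈ G
      · right
        refine Set.mem_iUnion.2 ⟨⟨s x, s.mem_range_self x⟩, ?_, ?_⟩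
        · exact Set.mem_singleton _
        · intro hxZ
          exact hx (Set.mem_iUnion.2 ⟨⟨s x, s.mem_range_self x⟩, hxZ, hxG⟩)
      · exact Or.inl hxG
    calc μ (⋃ y, Z y ∩ G)ᶜ ≤ μ Gᶜ + μ (⋃ y : {y // y ∈ s.range}, (s ⁻¹' {(y : X₂)} \ Z y)) :=
          le_trans (measure_mono hsub) (measure_union_le _ _)
      _ ≤ δ / 2 + ∑' y : {y // y ∈ s.range}, μ (s ⁻¹' {(y : X₂)} \ Z y) :=
          add_le_add hGμ (measure_iUnion_le _)
      _ ≤ δ / 2 + δ / 2 :=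
          add_le_add le_rfl (le_trans (ENNReal.tsum_le_tsum fun y => (hZμ y).le) hε'sum.le)
      _ = δ := ENNReal.add_halves δ
  · intro x hx
    obtain ⟨y, hyZ, hyG⟩ := Set.mem_iUnion.1 hx
    have hsx : s x = (y : X₂) := hZsub y hyZ
    have hUopen : IsOpen (⋃ z : {z // z ∈ s.range}, if z = y then (∅ : Set X₁) else Z z)ᶜ := by
      refine (isClosed_iUnion_of_finite fun z => ?_).isOpen_compl
      by_cases hz : z = y <;> simp [hz, hZclosed z]
    have hxU : x ∈ (⋃ z : {z // z ∈ s.range}, if z = y then (∅ : Set X₁) else Z z)ᶜ := by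
      intro hmem
      obtain ⟨z, hz⟩ := Set.mem_iUnion.1 hmem
      by_cases hzy : z = y
      · simp [hzy] at hz
      · rw [if_neg hzy] at hz
        have : s x = (z : X₂) := hZsub z hz
        exact hzy (Subtype.ext (by rw [← this, hsx]))
    have key : ∀ p ∈ (⋃ y, Z y ∩ G) ∩
        (⋃ z : {z // z ∈ s.range}, if z = y then (∅ : Set X₁) else Z z)ᶜ, s p = (y : X₂) := by
      rintro p ⟨hpD, hpU⟩
      obtain ⟨z, hpz, _⟩ := Set.mem_iUnion.1 hpD
      by_cases hzy : z = y
      · rw [← hzy]; exact hZsub z hpz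
      · exact absurd (Set.mem_iUnion.2 ⟨z, by rw [if_neg hzy]; exact hpz⟩) hpU
    refine (continuousWithinAt_const (b := (y : X₂))).congr_of_eventuallyEq ?_ hsx
    filter_upwards [eventually_nhdsWithin_of_eventually_nhds (hUopen.eventually_mem hxU),
      self_mem_nhdsWithin] with p hpU hpD
    exact key p ⟨hpD, hpU⟩

lemma my_lusin {X₁ X₂ : Type*} [MetricSpace X₁] [CompleteSpace X₁]
    [TopologicalSpace.SeparableSpace X₁]
    [MetricSpace X₂] [TopologicalSpace.SeparableSpace X₂]
    [MeasurableSpace X₁] [BorelSpace X₁] [MeasurableSpace X₂] [BorelSpace X₂]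
    (μ : Measure X₁) [IsFiniteMeasure μ] {F : X₁ → X₂} (hF : Measurable F)
    {δ : ℝ≥0∞} (hδ : δ ≠ 0) :
    ∃ K : Set X₁, IsCompact K ∧ μ Kᶜ ≤ δ ∧ ContinuousOn F K := by
  rcases isEmpty_or_nonempty X₂ with hX₂ | hX₂
  · haveI : IsEmpty X₁ := Function.isEmpty F
    refine ⟨∅, isCompact_empty, ?_, continuousOn_empty F⟩
    rw [Set.eq_empty_of_isEmpty (∅ : Set X₁)ᶜ]
    simp
  -- basic quantities
  set δ' := min δ 1 with hδ'def
  have hδ'0 : δ' ≠ 0 := by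
    simp only [hδ'def, ne_eq, min_eq_iff]
    intro h
    rcases h with ⟨h, -⟩ | ⟨h, -⟩
    · exact hδ h
    · exact one_ne_zero h
  have hδ'top : δ' ≠ ∞ := ne_top_of_le_ne_top ENNReal.one_ne_top (min_le_right _ _)
  have hδ'δ : δ' ≤ δ := min_le_left _ _
  have hhalf : δ' / 2 ≠ 0 := (ENNReal.half_pos hδ'0).ne'
  have hquarter : δ' / 2 / 2 ≠ 0 := (ENNReal.half_pos hhalf).ne'
  have heighth : δ' / 2 / 2 / 2 ≠ 0 := (ENNReal.half_pos hquarter).ne'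
  -- simple approximations
  have hy₀ : (Classical.arbitrary X₂) ∈ (univ : Set X₂) := mem_univ _
  set sq : ℕ → SimpleFunc X₁ X₂ :=
    fun m => SimpleFunc.approxOn F hF univ (Classical.arbitrary X₂) hy₀ m with hsq
  have htend : ∀ x, Tendsto (fun m => sq m x) atTop (𝓝 (F x)) := by
    intro x
    apply SimpleFunc.tendsto_approxOn hF hy₀
    rw [closure_univ]
    exact mem_univ _
  haveI : SecondCountableTopology X₂ := UniformSpace.secondCountable_of_separable X₂
  -- Egorov
  have hε : (0:ℝ) < (δ' / 2).toReal :=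
    ENNReal.toReal_pos hhalf (ne_top_of_le_ne_top hδ'top ENNReal.half_le_self)
  obtain ⟨t, htm, htμ, htu⟩ := tendstoUniformlyOn_of_ae_tendsto'
    (μ := μ) (f := fun m => sq m) (g := F)
    (fun m => (sq m).stronglyMeasurable) hF.stronglyMeasurable
    (ae_of_all μ htend) hε
  have htμ' : μ t ≤ δ' / 2 := by
    rwa [ENNReal.ofReal_toReal (ne_top_of_le_ne_top hδ'top ENNReal.half_le_self)] at htμ
  -- closed subset of tᶜ
  obtain ⟨Z, hZsub, hZclosed, hZμ⟩ :=
    htm.compl.exists_isClosed_diff_lt (measure_ne_top μ _) hquarter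
  -- global compact
  obtain ⟨G, hGc, hGμ⟩ := my_tight μ heighth
  -- compacts for simple functions
  obtain ⟨ε', hε'pos, hε'sum⟩ := ENNReal.exists_pos_sum_of_countable' heighth ℕ
  have hD : ∀ m, ∃ D : Set X₁, IsCompact D ∧ μ Dᶜ ≤ ε' m ∧ ContinuousOn (sq m) D :=
    fun m => my_simpleFunc_continuousOn μ (sq m) (hε'pos m).ne'
  choose D hDc hDμ hDcont using hD
  refine ⟨(Z ∩ G) ∩ ⋂ m, D m, ?_, ?_, ?_⟩
  · exact ((hGc.inter_left hZclosed).inter_right (isClosed_iInter fun m => (hDc m).isClosed))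
  · have hZc : Zᶜ ⊆ t ∪ (tᶜ \ Z) := by
      intro x hx
      by_cases hxt : x ∈ t
      · exact Or.inl hxt
      · exact Or.inr ⟨hxt, hx⟩
    have e1 : δ'/2/2/2 + δ'/2/2/2 = δ'/2/2 := ENNReal.add_halves _
    have e2 : δ'/2/2 + δ'/2/2 = δ'/2 := ENNReal.add_halves _
    have e3 : δ'/2 + δ'/2 = δ' := ENNReal.add_halves _
    calc μ (((Z ∩ G) ∩ ⋂ m, D m)ᶜ)
        = μ ((Z ∩ G)ᶜ ∪ (⋂ m, D m)ᶜ) := by rw [Set.compl_inter]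
      _ ≤ μ (Z ∩ G)ᶜ + μ (⋂ m, D m)ᶜ := measure_union_le _ _
      _ = μ (Zᶜ ∪ Gᶜ) + μ (⋃ m, (D m)ᶜ) := by rw [Set.compl_inter, Set.compl_iInter]
      _ ≤ (μ Zᶜ + μ Gᶜ) + ∑' m, μ ((D m)ᶜ) :=
          add_le_add (measure_union_le _ _) (measure_iUnion_le _)
      _ ≤ ((μ t + μ (tᶜ \ Z)) + δ'/2/2/2) + δ'/2/2/2 := by
          refine add_le_add (add_le_add ?_ hGμ) ?_
          · exact le_trans (measure_mono hZc) (measure_union_le _ _)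
          · exact le_trans (ENNReal.tsum_le_tsum fun m => hDμ m) hε'sum.le
      _ ≤ ((δ'/2 + δ'/2/2) + δ'/2/2/2) + δ'/2/2/2 := by
          exact add_le_add (add_le_add (add_le_add htμ' hZμ.le) le_rfl) le_rfl
      _ = (δ'/2 + δ'/2/2) + (δ'/2/2/2 + δ'/2/2/2) := add_assoc _ _ _
      _ = δ'/2 + (δ'/2/2 + δ'/2/2) := by rw [e1, add_assoc]
      _ = δ' := by rw [e2, e3]
      _ ≤ δ := hδ'δ
  · have hKt : (Z ∩ G) ∩ ⋂ m, D m ⊆ tᶜ :=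
      fun x hx => hZsub hx.1.1
    apply TendstoUniformlyOn.continuousOn (htu.mono hKt)
    apply Filter.Frequently.of_forall
    intro m
    exact (hDcont m).mono fun x hx => (Set.mem_iInter.1 hx.2) m

/-- Convergence in measure from narrow convergence of the graphs, Lemma 6.6. -/
theorem convergence_in_measure_of_narrow
    {X₁ X₂ : Type*} [MetricSpace X₁] [CompleteSpace X₁]
    [TopologicalSpace.SeparableSpace X₁]
    [MetricSpace X₂] [CompleteSpace X₂] [TopologicalSpace.SeparableSpace X₂]
    [MeasurableSpace X₁] [BorelSpace X₁] [MeasurableSpace X₂] [BorelSpace X₂]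
    (μ : Measure X₁) [IsProbabilityMeasure μ]
    (Fn : ℕ → X₁ → X₂) (F : X₁ → X₂)
    (hFn : ∀ n, Measurable (Fn n)) (hF : Measurable F)
    (hnarrow : ∀ f : BoundedContinuousFunction (X₁ × X₂) ℝ,
      Tendsto (fun n => ∫ p, f p ∂(μ.map (fun x => (x, Fn n x))))
        atTop (𝓝 (∫ p, f p ∂(μ.map (fun x => (x, F x)))))) :
    ∀ ε > (0:ℝ), Tendsto (fun n => μ {x | ε < dist (Fn n x) (F x)}) atTop (𝓝 0) := by
  intro ε hε
  rw [ENNReal.tendsto_nhds_zero]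
  intro η hη
  -- choose a real δ
  set δ' : ℝ≥0∞ := min η 1 with hδ'def
  have hδ'0 : δ' ≠ 0 := by
    simp only [hδ'def, ne_eq, min_eq_iff]
    rintro (⟨h, -⟩ | ⟨h, -⟩)
    · exact hη.ne' h
    · exact one_ne_zero h
  have hδ'top : δ' ≠ ∞ := ne_top_of_le_ne_top ENNReal.one_ne_top (min_le_right _ _)
  set δ : ℝ := δ'.toReal / 3 with hδdef
  have hδpos : 0 < δ := by
    have := ENNReal.toReal_pos hδ'0 hδ'top
    positivity
  have h3δ : ENNReal.ofReal (3 * δ) ≤ η := by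
    rw [hδdef]
    rw [show 3 * (δ'.toReal / 3) = δ'.toReal by ring]
    rw [ENNReal.ofReal_toReal hδ'top]
    exact min_le_left _ _
  have hδlt1 : δ < 1 := by
    have h1 : δ'.toReal ≤ 1 := by
      have := ENNReal.toReal_mono ENNReal.one_ne_top (min_le_right η 1)
      simpa using this
    rw [hδdef]; linarith
  -- Lusin
  obtain ⟨K, hKc, hKμ, hKF⟩ := my_lusin μ hF (ENNReal.ofReal_pos.2 hδpos).ne'
  have hKne : K.Nonempty := by
    rw [Set.nonempty_iff_ne_empty]
    intro hKe
    rw [hKe, Set.compl_empty, measure_univ] at hKμ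
    exact absurd (lt_of_le_of_lt hKμ (ENNReal.ofReal_lt_one.2 hδlt1)) (lt_irrefl _)
  -- uniform continuity of F on K
  obtain ⟨r, hr, hruc⟩ := (Metric.uniformContinuousOn_iff.1
    (hKc.uniformContinuousOn_of_continuous hKF)) (ε / 2) (half_pos hε)
  set c : ℝ := min r (ε / 2) with hcdef
  have hc : 0 < c := lt_min hr (half_pos hε)
  -- the compact graph
  set Γ : Set (X₁ × X₂) := (fun x => (x, F x)) '' K with hΓdef
  have hΓne : Γ.Nonempty := hKne.image _
  -- the test function
  set g : X₁ × X₂ → ℝ := fun p => min c (Metric.infDist p Γ) with hgdef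
  have hgc : Continuous g := continuous_const.min (Metric.continuous_infDist_pt Γ)
  have hg0 : ∀ p, 0 ≤ g p := fun p => le_min hc.le Metric.infDist_nonneg
  have hgle : ∀ p, g p ≤ c := fun p => min_le_left _ _
  set f : BoundedContinuousFunction (X₁ × X₂) ℝ :=
    ⟨⟨g, hgc⟩, c, fun p q => by
      rw [Real.dist_eq, abs_sub_le_iff]
      constructor
      · have := hgle p; have := hg0 q; simp only [ContinuousMap.coe_mk]; linarith
      · have := hgle q; have := hg0 p; simp only [ContinuousMap.coe_mk]; linarith⟩ with hfdef
  -- integrability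
  have hint : ∀ (G : X₁ → X₂), Measurable G → Integrable (fun x => g (x, G x)) μ := by
    intro G hG
    refine Integrable.mono' (integrable_const c)
      ((hgc.measurable.comp (measurable_id.prodMk hG)).aestronglyMeasurable)
      (ae_of_all _ fun x => ?_)
    rw [Real.norm_eq_abs, abs_of_nonneg (hg0 _)]
    exact hgle _
  -- rewrite the narrow convergence
  have hrw : ∀ (G : X₁ → X₂), Measurable G →
      ∫ p, f p ∂(μ.map (fun x => (x, G x))) = ∫ x, g (x, G x) ∂μ := by
    intro G hG
    exact integral_map (measurable_id.prodMk hG).aemeasurable hgc.aestronglyMeasurable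
  have hnar : Tendsto (fun n => ∫ x, g (x, Fn n x) ∂μ) atTop (𝓝 (∫ x, g (x, F x) ∂μ)) := by
    have := hnarrow f
    rw [hrw F hF] at this
    simp only [hrw (Fn _) (hFn _)] at this
    exact this
  -- upper bound on the limit
  have hI : ∫ x, g (x, F x) ∂μ ≤ c * δ := by
    have hmono : ∫ x, g (x, F x) ∂μ ≤ ∫ x, Kᶜ.indicator (fun _ => c) x ∂μ := by
      refine integral_mono (hint F hF)
        ((integrable_const c).indicator hKc.isClosed.measurableSet.compl) fun x => ?_
      by_cases hx : x ∈ K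
      · have h0 : Metric.infDist (x, F x) Γ = 0 :=
          Metric.infDist_zero_of_mem ⟨x, hx, rfl⟩
        rw [Set.indicator_of_notMem (by simpa using hx)]
        simp [hgdef, h0, min_eq_right hc.le]
      · rw [Set.indicator_of_mem (by simpa using hx)]
        exact hgle _
    rw [integral_indicator_const c hKc.isClosed.measurableSet.compl] at hmono
    have htr : (μ Kᶜ).toReal ≤ δ := ENNReal.toReal_le_of_le_ofReal hδpos.le hKμ
    calc ∫ x, g (x, F x) ∂μ ≤ (μ Kᶜ).toReal • c := hmono
      _ = (μ Kᶜ).toReal * c := by rw [smul_eq_mul]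
      _ ≤ δ * c := mul_le_mul_of_nonneg_right htr hc.le
      _ = c * δ := mul_comm _ _
  -- eventual bound
  have hev : ∀ᶠ n in atTop, ∫ x, g (x, Fn n x) ∂μ < 2 * (c * δ) := by
    apply hnar.eventually_lt_const
    have : 0 < c * δ := mul_pos hc hδpos
    linarith
  -- Markov
  have hmark : ∀ n, μ ({x | ε < dist (Fn n x) (F x)} ∩ K)
      ≤ ENNReal.ofReal ((∫ x, g (x, Fn n x) ∂μ) / c) := by
    intro n
    have hsub : {x | ε < dist (Fn n x) (F x)} ∩ K ⊆ {x | c ≤ g (x, Fn n x)} := by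
      rintro x ⟨hxd, hxK⟩
      have hinf : c ≤ Metric.infDist (x, Fn n x) Γ := by
        refine le_of_not_gt fun hlt => ?_
        rw [Metric.infDist_lt_iff hΓne] at hlt
        obtain ⟨p, hpΓ, hpd⟩ := hlt
        obtain ⟨k, hkK, rfl⟩ := hpΓ
        rw [Prod.dist_eq] at hpd
        have h1 : dist x k < r :=
          lt_of_lt_of_le (lt_of_le_of_lt (le_max_left _ _) hpd) (min_le_left _ _)
        have h2 : dist (F x) (F k) < ε / 2 := hruc x hxK k hkK h1
        have h3 : dist (Fn n x) (F k) < ε / 2 :=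
          lt_of_lt_of_le (lt_of_le_of_lt (le_max_right _ _) hpd) (min_le_right _ _)
        have h4 : dist (Fn n x) (F x) ≤ dist (Fn n x) (F k) + dist (F k) (F x) :=
          dist_triangle _ _ _
        rw [dist_comm (F k) (F x)] at h4
        have hε' : ε < dist (Fn n x) (F x) := hxd
        linarith
      exact le_min le_rfl hinf
    have hmk := mul_meas_ge_le_integral_of_nonneg (ae_of_all μ fun x => hg0 (x, Fn n x))
      (hint (Fn n) (hFn n)) c
    have hμle : (μ ({x | ε < dist (Fn n x) (F x)} ∩ K)).toReal
        ≤ (μ {x | c ≤ g (x, Fn n x)}).toReal :=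
      ENNReal.toReal_mono (measure_ne_top _ _) (measure_mono hsub)
    rw [← ENNReal.ofReal_toReal (measure_ne_top μ _)]
    apply ENNReal.ofReal_le_ofReal
    rw [le_div_iff₀ hc]
    calc (μ ({x | ε < dist (Fn n x) (F x)} ∩ K)).toReal * c
        ≤ (μ {x | c ≤ g (x, Fn n x)}).toReal * c := mul_le_mul_of_nonneg_right hμle hc.le
      _ = c * (μ {x | c ≤ g (x, Fn n x)}).toReal := mul_comm _ _
      _ ≤ ∫ x, g (x, Fn n x) ∂μ := hmk
  -- conclusion
  filter_upwards [hev] with n hn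
  have hd1 : (∫ x, g (x, Fn n x) ∂μ) / c ≤ 2 * δ := by
    rw [div_le_iff₀ hc]
    calc (∫ x, g (x, Fn n x) ∂μ) ≤ 2 * (c * δ) := hn.le
      _ = 2 * δ * c := by ring
  calc μ {x | ε < dist (Fn n x) (F x)}
      ≤ μ (({x | ε < dist (Fn n x) (F x)} ∩ K) ∪ Kᶜ) := by
        apply measure_mono
        intro x hx
        by_cases hxK : x ∈ K
        · exact Or.inl ⟨hx, hxK⟩
        · exact Or.inr hxK
    _ ≤ μ ({x | ε < dist (Fn n x) (F x)} ∩ K) + μ Kᶜ := measure_union_le _ _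
    _ ≤ ENNReal.ofReal ((∫ x, g (x, Fn n x) ∂μ) / c) + ENNReal.ofReal δ :=
        add_le_add (hmark n) hKμ
    _ ≤ ENNReal.ofReal (2 * δ) + ENNReal.ofReal δ :=
        add_le_add (ENNReal.ofReal_le_ofReal hd1) le_rfl
    _ = ENNReal.ofReal (3 * δ) := by
        rw [← ENNReal.ofReal_add (by linarith) hδpos.le]
        ring_nf
    _ ≤ η := h3δ
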